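/- Let G be the star K_{1,3} on 4 vertices and let A be a 4×4 nonnegative symmetric matrix with at most one zero off-diagonal entry per row. Then there exists a path P on the 4 vertices such that F_A(G) < F_A(P). -/
import Mathlib

open SimpleGraph Finset

/-- `F_A(G) = ∑_{i<j} d_G(i,j) · a_{i,j}`. -/
noncomputable def FA {n : ℕ} (A : Matrix (Fin n) (Fin n) ℝ) (G : SimpleGraph (Fin n)) : ℝ :=
  ∑ i : Fin n, ∑ j : Fin n, if i < j then (G.dist i j : ℝ) * A i j else 0

/-- `G` is a path on its vertex set (isomorphic to the path graph). -/
def IsPathGraph {n : ℕ} (G : SimpleGraph (Fin n)) : Prop :=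
  Nonempty (G ≃g SimpleGraph.pathGraph n)

/-- The distance matrix of `G`. -/
noncomputable def distMat {n : ℕ} (G : SimpleGraph (Fin n)) : Matrix (Fin n) (Fin n) ℝ :=
  fun i j => (G.dist i j : ℝ)

/-- The diagonal matrix of row sums of the distance matrix. -/
noncomputable def transMat {n : ℕ} (G : SimpleGraph (Fin n)) : Matrix (Fin n) (Fin n) ℝ :=
  Matrix.diagonal fun i => ∑ j : Fin n, (G.dist i j : ℝ)

/-- Distance signless Laplacian `D^Q(G) = T(G) + D(G)`. -/
noncomputable def DQmat {n : ℕ} (G : SimpleGraph (Fin n)) : Matrix (Fin n) (Fin n) ℝ :=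
  transMat G + distMat G

/-- Distance Laplacian `D^L(G) = T(G) - D(G)`. -/
noncomputable def DLmat {n : ℕ} (G : SimpleGraph (Fin n)) : Matrix (Fin n) (Fin n) ℝ :=
  transMat G - distMat G

/-- Largest eigenvalue of a matrix, as the supremum of its spectrum. -/
noncomputable def maxEig {n : ℕ} (M : Matrix (Fin n) (Fin n) ℝ) : ℝ :=
  sSup (spectrum ℝ M)

lemma dist2' {V : Type*} {G : SimpleGraph V} {u v m : V} (hne : u ≠ v) (hna : ¬G.Adj u v)
    (h1 : G.Adj u m) (h2 : G.Adj m v) : G.dist u v = 2 := by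
  have hle : G.dist u v ≤ 2 := by
    simpa using SimpleGraph.dist_le (Walk.cons h1 (Walk.cons h2 Walk.nil))
  have h0 : G.dist u v ≠ 0 := SimpleGraph.dist_ne_zero_iff_ne_and_reachable.mpr
    ⟨hne, (Walk.cons h1 (Walk.cons h2 Walk.nil)).reachable⟩
  have h1' : G.dist u v ≠ 1 := fun h => hna (SimpleGraph.dist_eq_one_iff_adj.mp h)
  omega

lemma dist3' {V : Type*} {G : SimpleGraph V} {u v m₁ m₂ : V} (hne : u ≠ v) (hna : ¬G.Adj u v)
    (hno : ∀ m, ¬(G.Adj u m ∧ G.Adj m v))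
    (h1 : G.Adj u m₁) (h2 : G.Adj m₁ m₂) (h3 : G.Adj m₂ v) : G.dist u v = 3 := by
  have hle : G.dist u v ≤ 3 := by
    simpa using SimpleGraph.dist_le (Walk.cons h1 (Walk.cons h2 (Walk.cons h3 Walk.nil)))
  have h0 : G.dist u v ≠ 0 := SimpleGraph.dist_ne_zero_iff_ne_and_reachable.mpr
    ⟨hne, (Walk.cons h1 (Walk.cons h2 (Walk.cons h3 Walk.nil))).reachable⟩
  have h1' : G.dist u v ≠ 1 := fun h => hna (SimpleGraph.dist_eq_one_iff_adj.mp h)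
  have h2' : G.dist u v ≠ 2 := by
    intro h
    obtain ⟨p, hp⟩ := SimpleGraph.exists_walk_of_dist_ne_zero (G := G) (u := u) (v := v) (by omega)
    rw [h] at hp
    cases p with
    | nil => simp at hp
    | cons ha q =>
      cases q with
      | nil => simp at hp
      | cons hb r =>
        cases r with
        | nil => exact hno _ ⟨ha, hb⟩
        | cons hc s => simp [Walk.length_cons] at hp
  omega

lemma half_sum (f : Fin 4 → Fin 4 → ℝ) (hs : ∀ i j, f i j = f j i) (hd : ∀ i, f i i = 0) :
    ∑ i : Fin 4, ∑ j : Fin 4, (if i < j then f i j else 0)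
      = (1/2) * ∑ i : Fin 4, ∑ j : Fin 4, f i j := by
  have hswap : ∑ i : Fin 4, ∑ j : Fin 4, (if j < i then f i j else 0)
      = ∑ i : Fin 4, ∑ j : Fin 4, (if i < j then f i j else 0) := by
    rw [Finset.sum_comm]
    refine Finset.sum_congr rfl fun i _ => Finset.sum_congr rfl fun j _ => ?_
    by_cases h : i < j <;> simp [h, hs i j]
  have htot : (∑ i : Fin 4, ∑ j : Fin 4, (if i < j then f i j else 0))
      + ∑ i : Fin 4, ∑ j : Fin 4, (if j < i then f i j else 0)
      = ∑ i : Fin 4, ∑ j : Fin 4, f i j := by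
    rw [← Finset.sum_add_distrib]
    refine Finset.sum_congr rfl fun i _ => ?_
    rw [← Finset.sum_add_distrib]
    refine Finset.sum_congr rfl fun j _ => ?_
    rcases lt_trichotomy i j with h | h | h
    · simp [h, not_lt_of_gt h]
    · subst h; simp [hd i]
    · simp [h, not_lt_of_gt h]
  linarith

lemma FA_eq {A : Matrix (Fin 4) (Fin 4) ℝ} (hsymm : A.IsSymm) (H : SimpleGraph (Fin 4)) :
    FA A H = (1/2) * ∑ i : Fin 4, ∑ j : Fin 4, (H.dist i j : ℝ) * A i j := by
  refine half_sum _ (fun i j => ?_) (fun i => by simp)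
  rw [SimpleGraph.dist_comm, hsymm.apply j i]

theorem stmt_15 (G : SimpleGraph (Fin 4)) (c : Fin 4)
    (hstar : ∀ u v : Fin 4, G.Adj u v ↔ (u = c ∧ v ≠ c) ∨ (v = c ∧ u ≠ c))
    (A : Matrix (Fin 4) (Fin 4) ℝ) (hsymm : A.IsSymm) (hnn : ∀ i j, 0 ≤ A i j)
    (hrow : ∀ i j₁ j₂ : Fin 4, j₁ ≠ i → j₂ ≠ i → A i j₁ = 0 → A i j₂ = 0 → j₁ = j₂) :
    ∃ P : SimpleGraph (Fin 4), IsPathGraph P ∧ FA A G < FA A P := by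
  classical
  -- choose w a leaf with A c w > 0
  set σ : Equiv.Perm (Fin 4) := Equiv.swap c 1 with hσ
  have hσ1 : σ 1 = c := Equiv.swap_apply_right c 1
  have hl0 : σ 0 ≠ c := by
    rw [← hσ1]; exact σ.injective.ne (by decide)
  have hl2 : σ 2 ≠ c := by
    rw [← hσ1]; exact σ.injective.ne (by decide)
  have hwex : ∃ w, w ≠ c ∧ 0 < A c w := by
    by_cases h : A c (σ 0) = 0
    · have h2 : A c (σ 2) ≠ 0 := by
        intro h2
        exact σ.injective.ne (show (0 : Fin 4) ≠ 2 by decide) (hrow c (σ 0) (σ 2) hl0 hl2 h h2)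
      exact ⟨σ 2, hl2, lt_of_le_of_ne (hnn c (σ 2)) (Ne.symm h2)⟩
    · exact ⟨σ 0, hl0, lt_of_le_of_ne (hnn c (σ 0)) (Ne.symm h)⟩
  obtain ⟨w, hwc, hw⟩ := hwex
  -- find the other two vertices
  set π : Equiv.Perm (Fin 4) := Equiv.swap 0 c with hπ
  have hπ0 : π 0 = c := Equiv.swap_apply_left 0 c
  set w0 : Fin 4 := π.symm w with hw0def
  have hw0 : w0 ≠ 0 := by
    intro h
    apply hwc
    have : w = π w0 := (π.apply_symm_apply w).symm
    rw [this, h, hπ0]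
  set π' : Equiv.Perm (Fin 4) := Equiv.swap 1 w0 with hπ'
  set ρ : Equiv.Perm (Fin 4) := π'.trans π with hρ
  have hρ0 : ρ 0 = c := by
    have : π' 0 = 0 := Equiv.swap_apply_of_ne_of_ne (by decide) (Ne.symm hw0)
    simp [hρ, Equiv.trans_apply, this, hπ0]
  have hρ1 : ρ 1 = w := by
    have : π' 1 = w0 := Equiv.swap_apply_left 1 w0
    simp [hρ, Equiv.trans_apply, this, hw0def]
  obtain ⟨u, v, hu, hv, huv, huw, hvw, hord⟩ :
      ∃ u v, u ≠ c ∧ v ≠ c ∧ u ≠ v ∧ u ≠ w ∧ v ≠ w ∧ A v w ≤ A u w := by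
    have h2c : ρ 2 ≠ c := by rw [← hρ0]; exact ρ.injective.ne (by decide)
    have h3c : ρ 3 ≠ c := by rw [← hρ0]; exact ρ.injective.ne (by decide)
    have h2w : ρ 2 ≠ w := by rw [← hρ1]; exact ρ.injective.ne (by decide)
    have h3w : ρ 3 ≠ w := by rw [← hρ1]; exact ρ.injective.ne (by decide)
    have h23 : ρ 2 ≠ ρ 3 := ρ.injective.ne (by decide)
    by_cases h : A (ρ 3) w ≤ A (ρ 2) w
    · exact ⟨ρ 2, ρ 3, h2c, h3c, h23, h2w, h3w, h⟩
    · exact ⟨ρ 3, ρ 2, h3c, h2c, h23.symm, h3w, h2w, le_of_not_ge h⟩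
  -- the equiv giving the path ordering u, c, v, w
  have hinj : Function.Injective ![u, c, v, w] := by
    intro i j h
    fin_cases i <;> fin_cases j <;>
      first
      | rfl
      | exact absurd h hu | exact absurd h.symm hu
      | exact absurd h hv | exact absurd h.symm hv
      | exact absurd h huv | exact absurd h.symm huv
      | exact absurd h huw | exact absurd h.symm huw
      | exact absurd h hvw | exact absurd h.symm hvw
      | exact absurd h hwc | exact absurd h.symm hwc
  set e : Fin 4 ≃ Fin 4 := Equiv.ofBijective _ (Finite.injective_iff_bijective.mp hinj) with he
  have he0 : e 0 = u := rfl
  have he1 : e 1 = c := rfl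
  have he2 : e 2 = v := rfl
  have he3 : e 3 = w := rfl
  set P : SimpleGraph (Fin 4) := (pathGraph 4).map e.toEmbedding with hP
  refine ⟨P, ⟨(SimpleGraph.Iso.map e (pathGraph 4)).symm⟩, ?_⟩
  -- adjacency in P
  have hPadj : ∀ i j : Fin 4, P.Adj (e i) (e j) ↔ (pathGraph 4).Adj i j := by
    intro i j
    exact SimpleGraph.map_adj_apply
  -- adjacency in G
  have hadjc : ∀ x, x ≠ c → G.Adj c x := fun x hx => (hstar c x).2 (Or.inl ⟨rfl, hx⟩)
  have hnoadj : ∀ x y, x ≠ c → y ≠ c → ¬G.Adj x y := by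
    intro x y hx hy h
    rcases (hstar x y).1 h with ⟨h1, _⟩ | ⟨h1, _⟩
    exacts [hx h1, hy h1]
  -- distances in G
  have dG_cu : G.dist c u = 1 := SimpleGraph.dist_eq_one_iff_adj.mpr (hadjc u hu)
  have dG_cv : G.dist c v = 1 := SimpleGraph.dist_eq_one_iff_adj.mpr (hadjc v hv)
  have dG_cw : G.dist c w = 1 := SimpleGraph.dist_eq_one_iff_adj.mpr (hadjc w hwc)
  have dG_uc : G.dist u c = 1 := by rw [SimpleGraph.dist_comm]; exact dG_cu
  have dG_vc : G.dist v c = 1 := by rw [SimpleGraph.dist_comm]; exact dG_cv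
  have dG_wc : G.dist w c = 1 := by rw [SimpleGraph.dist_comm]; exact dG_cw
  have dG_uv : G.dist u v = 2 :=
    dist2' huv (hnoadj u v hu hv) (hadjc u hu).symm (hadjc v hv)
  have dG_uw : G.dist u w = 2 :=
    dist2' huw (hnoadj u w hu hwc) (hadjc u hu).symm (hadjc w hwc)
  have dG_vw : G.dist v w = 2 :=
    dist2' hvw (hnoadj v w hv hwc) (hadjc v hv).symm (hadjc w hwc)
  have dG_vu : G.dist v u = 2 := by rw [SimpleGraph.dist_comm]; exact dG_uv
  have dG_wu : G.dist w u = 2 := by rw [SimpleGraph.dist_comm]; exact dG_uw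
  have dG_wv : G.dist w v = 2 := by rw [SimpleGraph.dist_comm]; exact dG_vw
  -- distances in P
  have hPa01 : P.Adj u c := by rw [← he0, ← he1, hPadj]; rw [pathGraph_adj]; decide
  have hPa12 : P.Adj c v := by rw [← he1, ← he2, hPadj]; rw [pathGraph_adj]; decide
  have hPa23 : P.Adj v w := by rw [← he2, ← he3, hPadj]; rw [pathGraph_adj]; decide
  have hPn02 : ¬P.Adj u v := by
    rw [← he0, ← he2, hPadj, pathGraph_adj]; decide
  have hPn13 : ¬P.Adj c w := by
    rw [← he1, ← he3, hPadj, pathGraph_adj]; decide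
  have hPn03 : ¬P.Adj u w := by
    rw [← he0, ← he3, hPadj, pathGraph_adj]; decide
  have dP_uc : P.dist u c = 1 := SimpleGraph.dist_eq_one_iff_adj.mpr hPa01
  have dP_cv : P.dist c v = 1 := SimpleGraph.dist_eq_one_iff_adj.mpr hPa12
  have dP_vw : P.dist v w = 1 := SimpleGraph.dist_eq_one_iff_adj.mpr hPa23
  have dP_uv : P.dist u v = 2 := dist2' huv hPn02 hPa01 hPa12
  have dP_cw : P.dist c w = 2 := dist2' (fun h => hwc h.symm) hPn13 hPa12 hPa23
  have dP_uw : P.dist u w = 3 := by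
    refine dist3' huw hPn03 ?_ hPa01 hPa12 hPa23
    rintro m ⟨h1, h2⟩
    have h1' : (pathGraph 4).Adj 0 (e.symm m) := by
      rw [← hPadj, he0, e.apply_symm_apply]; exact h1
    have h2' : (pathGraph 4).Adj (e.symm m) 3 := by
      rw [← hPadj, he3, e.apply_symm_apply]; exact h2
    rw [pathGraph_adj] at h1' h2'
    simp only [Fin.val_zero] at h1'
    have : (3 : Fin 4).val = 3 := rfl
    omega
  have dP_cu : P.dist c u = 1 := by rw [SimpleGraph.dist_comm]; exact dP_uc
  have dP_vc : P.dist v c = 1 := by rw [SimpleGraph.dist_comm]; exact dP_cv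
  have dP_wv : P.dist w v = 1 := by rw [SimpleGraph.dist_comm]; exact dP_vw
  have dP_vu : P.dist v u = 2 := by rw [SimpleGraph.dist_comm]; exact dP_uv
  have dP_wc : P.dist w c = 2 := by rw [SimpleGraph.dist_comm]; exact dP_cw
  have dP_wu : P.dist w u = 3 := by rw [SimpleGraph.dist_comm]; exact dP_uw
  -- reindexing sums along e
  have reindex : ∀ g : Fin 4 → Fin 4 → ℝ,
      (∑ i : Fin 4, ∑ j : Fin 4, g i j) = ∑ i : Fin 4, ∑ j : Fin 4, g (e i) (e j) := by
    intro g
    rw [← Equiv.sum_comp e (fun i => ∑ j : Fin 4, g i j)]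
    exact Finset.sum_congr rfl fun i _ => (Equiv.sum_comp e (g (e i))).symm
  have hGval : FA A G = A u c + A c v + A c w + 2 * A u v + 2 * A u w + 2 * A v w
      + (A c u + A v c + A w c + 2 * A v u + 2 * A w u + 2 * A w v) / 2 * 0 + 0 := by
    rw [FA_eq hsymm, reindex]
    simp only [Fin.sum_univ_four, he0, he1, he2, he3, dG_uc, dG_cu, dG_cv, dG_vc, dG_cw, dG_wc,
      dG_uv, dG_vu, dG_uw, dG_wu, dG_vw, dG_wv, SimpleGraph.dist_self]
    push_cast
    have s1 : A c u = A u c := hsymm.apply u c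
    have s2 : A v c = A c v := hsymm.apply c v
    have s3 : A w c = A c w := hsymm.apply c w
    have s4 : A v u = A u v := hsymm.apply u v
    have s5 : A w u = A u w := hsymm.apply u w
    have s6 : A w v = A v w := hsymm.apply v w
    ring_nf
    rw [s1, s2, s3, s4, s5, s6]
    ring
  have hPval : FA A P = A u c + A c v + A v w + 2 * A u v + 2 * A c w + 3 * A u w := by
    rw [FA_eq hsymm, reindex]
    simp only [Fin.sum_univ_four, he0, he1, he2, he3, dP_uc, dP_cu, dP_cv, dP_vc, dP_cw, dP_wc,
      dP_uv, dP_vu, dP_uw, dP_wu, dP_vw, dP_wv, SimpleGraph.dist_self]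
    push_cast
    have s1 : A c u = A u c := hsymm.apply u c
    have s2 : A v c = A c v := hsymm.apply c v
    have s3 : A w c = A c w := hsymm.apply c w
    have s4 : A v u = A u v := hsymm.apply u v
    have s5 : A w u = A u w := hsymm.apply u w
    have s6 : A w v = A v w := hsymm.apply v w
    rw [s1, s2, s3, s4, s5, s6]
    ring
  rw [hGval, hPval]
  linarith
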